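/- For any positive vector x satisfying A x ≤ x (entrywise, with (Ax)_i = max_j a_{ij} x_j), where A is nonnegative with Tr(A) ≤ 1, and for positive q and nonzero nonnegative p, one has q^- x x^- p ≥ q^- A* p; i.e., q^- A* p is a lower bound for q^- x x^- p over the constraint set. -/
import Mathlib


open scoped BigOperators

noncomputable def mtMulMat {n : ℕ} (A B : Matrix (Fin n) (Fin n) ℝ) :
    Matrix (Fin n) (Fin n) ℝ :=
  fun i j => ⨆ k, A i k * B k j

noncomputable def mtMulVec {n : ℕ} (A : Matrix (Fin n) (Fin n) ℝ) (x : Fin n → ℝ) :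
    Fin n → ℝ :=
  fun i => ⨆ j, A i j * x j

noncomputable def mtPow {n : ℕ} (A : Matrix (Fin n) (Fin n) ℝ) : ℕ → Matrix (Fin n) (Fin n) ℝ
  | 0 => fun i j => if i = j then 1 else 0
  | m + 1 => mtMulMat (mtPow A m) A

noncomputable def mtTrace {n : ℕ} (A : Matrix (Fin n) (Fin n) ℝ) : ℝ := ⨆ i, A i i

noncomputable def mtTr {n : ℕ} (A : Matrix (Fin n) (Fin n) ℝ) : ℝ :=
  ⨆ m : Fin n, mtTrace (mtPow A (m.1 + 1))

noncomputable def kleeneStar {n : ℕ} (A : Matrix (Fin n) (Fin n) ℝ) :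
    Matrix (Fin n) (Fin n) ℝ :=
  fun i j => ⨆ m : Fin n, mtPow A m.1 i j

noncomputable def cycleMean {n : ℕ} (A : Matrix (Fin n) (Fin n) ℝ) (c : List (Fin n)) : ℝ :=
  (((c.zip (c.rotate 1)).map (fun p => A p.1 p.2)).prod) ^ ((1 : ℝ) / c.length)

noncomputable def specRad {n : ℕ} (A : Matrix (Fin n) (Fin n) ℝ) : ℝ :=
  sSup {r : ℝ | ∃ c : List (Fin n), c ≠ [] ∧ c.length ≤ n ∧ r = cycleMean A c}

lemma mtPow_nonneg {n : ℕ} (A : Matrix (Fin n) (Fin n) ℝ) (hA : ∀ i j, 0 ≤ A i j)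
    (hn : 0 < n) : ∀ m i j, 0 ≤ mtPow A m i j := by
  intro m
  induction m with
  | zero =>
    intro i j
    by_cases h : i = j <;> simp [mtPow, h]
  | succ m ih =>
    intro i j
    simp only [mtPow, mtMulMat]
    have h0 : (0:ℝ) ≤ mtPow A m i ⟨0, hn⟩ * A ⟨0, hn⟩ j := mul_nonneg (ih i _) (hA _ j)
    exact h0.trans (le_ciSup (f := fun k => mtPow A m i k * A k j) (Set.finite_range _).bddAbove ⟨0, hn⟩)

theorem stmt15 {n : ℕ} (hn : 0 < n) (A : Matrix (Fin n) (Fin n) ℝ)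
    (hA : ∀ i j, 0 ≤ A i j) (hTr : mtTr A ≤ 1)
    (p : Fin n → ℝ) (hp : ∀ i, 0 ≤ p i) (hp0 : p ≠ 0)
    (q : Fin n → ℝ) (hq : ∀ i, 0 < q i)
    (x : Fin n → ℝ) (hx : ∀ i, 0 < x i)
    (hAx : ∀ i, (⨆ j, A i j * x j) ≤ x i) :
    (⨆ i, ⨆ j, (q i)⁻¹ * kleeneStar A i j * p j) ≤
      (⨆ i, x i / q i) * (⨆ j, p j / x j) := by
  haveI : NeZero n := ⟨hn.ne'⟩
  -- powers preserve the invariant A^m x ≤ x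
  have hpow : ∀ m i j, mtPow A m i j * x j ≤ x i := by
    intro m
    induction m with
    | zero =>
      intro i j
      simp only [mtPow]
      by_cases h : i = j
      · simp [h]
      · simp [h, (hx i).le]
    | succ m ih =>
      intro i j
      have hPnn : ∀ i k, 0 ≤ mtPow A m i k := mtPow_nonneg A hA hn m
      simp only [mtPow, mtMulMat]
      have : (⨆ k, mtPow A m i k * A k j) ≤ x i / x j := by
        apply ciSup_le
        intro k
        rw [le_div_iff₀ (hx j)]
        have h1 : A k j * x j ≤ x k := by
          exact le_trans (le_ciSup (f := fun j => A k j * x j) (Set.finite_range _).bddAbove j) (hAx k)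
        calc mtPow A m i k * A k j * x j = mtPow A m i k * (A k j * x j) := by ring
          _ ≤ mtPow A m i k * x k := mul_le_mul_of_nonneg_left h1 (hPnn i k)
          _ ≤ x i := ih i k
      exact (le_div_iff₀ (hx j)).mp this
  have hstar : ∀ i j, kleeneStar A i j * x j ≤ x i := by
    intro i j
    rw [← le_div_iff₀ (hx j)]
    exact ciSup_le fun m => (le_div_iff₀ (hx j)).mpr (hpow m.1 i j)
  have hstarnn : ∀ i j, 0 ≤ kleeneStar A i j := by
    intro i j
    exact (mtPow_nonneg A hA hn (⟨0, hn⟩ : Fin n).1 i j).trans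
      (le_ciSup (f := fun m : Fin n => mtPow A m.1 i j) (Set.finite_range _).bddAbove ⟨0, hn⟩)
  apply ciSup_le
  intro i
  apply ciSup_le
  intro j
  have key : (q i)⁻¹ * kleeneStar A i j * p j ≤ (x i / q i) * (p j / x j) := by
    have h1 : kleeneStar A i j ≤ x i / x j := (le_div_iff₀ (hx j)).mpr (hstar i j)
    calc (q i)⁻¹ * kleeneStar A i j * p j
        ≤ (q i)⁻¹ * (x i / x j) * p j := by
          have := mul_le_mul_of_nonneg_left h1 (inv_nonneg.mpr (hq i).le)
          exact mul_le_mul_of_nonneg_right this (hp j)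
      _ = (x i / q i) * (p j / x j) := by ring
  refine key.trans (mul_le_mul ?_ ?_ ?_ ?_)
  · exact le_ciSup (f := fun i => x i / q i) (Set.finite_range _).bddAbove i
  · exact le_ciSup (f := fun j => p j / x j) (Set.finite_range _).bddAbove j
  · exact div_nonneg (hp j) (hx j).le
  · exact le_trans (div_nonneg (hx i).le (hq i).le)
      (le_ciSup (f := fun i => x i / q i) (Set.finite_range _).bddAbove i)
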